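/- Let Σ : G → G and Υ : H → H be strongly monotone self-adjoint bounded linear operators with strong monotonicity constants σ and τ respectively, let L : H → G be bounded linear, and define V : H × G → H × G by V(x,u) = (Υ⁻¹x − L*u, Σ⁻¹u − Lx). Then V is a bounded self-adjoint linear operator, and if ‖√Σ L √Υ‖ ≤ 1, V is (τσ/(τ+σ))-cocoercive (in particular monotone). -/

import Mathlib

open RealInnerProductSpace

/-- The pair `(x, u)` regarded as an element of the Hilbert direct sum `H ⊕ G`. -/
noncomputable def pd {H G : Type*} (x : H) (u : G) : WithLp 2 (H × G) :=
  (WithLp.equiv 2 (H × G)).symm (x, u)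


lemma cs_pos {E : Type*} [NormedAddCommGroup E] [InnerProductSpace ℝ E]
    (V : E →L[ℝ] E) (hsa : ∀ z w : E, ⟪V z, w⟫ = ⟪z, V w⟫)
    (hpos : ∀ z : E, 0 ≤ ⟪V z, z⟫) (z w : E) :
    ⟪V z, w⟫ ^ 2 ≤ ⟪V z, z⟫ * ⟪V w, w⟫ := by
  have h : ∀ t : ℝ, 0 ≤ ⟪V w, w⟫ * (t * t) + (2 * ⟪V z, w⟫) * t + ⟪V z, z⟫ := by
    intro t
    have h0 := hpos (z + t • w)
    have h1 : ⟪V w, z⟫ = ⟪V z, w⟫ := by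
      rw [hsa w z, real_inner_comm]
    simp only [map_add, map_smul, inner_add_left, inner_add_right, inner_smul_left,
      inner_smul_right, RCLike.ofReal_real_eq_id, id_eq, conj_trivial] at h0
    rw [h1] at h0
    nlinarith [h0]
  have hd := discrim_le_zero h
  rw [discrim] at hd
  nlinarith [hd]

lemma coco {E : Type*} [NormedAddCommGroup E] [InnerProductSpace ℝ E]
    (V : E →L[ℝ] E) (hsa : ∀ z w : E, ⟪V z, w⟫ = ⟪z, V w⟫)
    (hpos : ∀ z : E, 0 ≤ ⟪V z, z⟫) (c : ℝ) (hc : 0 < c)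
    (hb : ∀ z : E, ⟪V z, z⟫ ≤ c * ‖z‖ ^ 2) (z : E) :
    (1 / c) * ‖V z‖ ^ 2 ≤ ⟪V z, z⟫ := by
  have h1 := cs_pos V hsa hpos z (V z)
  have h2 : ⟪V z, V z⟫ = ‖V z‖ ^ 2 := real_inner_self_eq_norm_sq _
  have h3 := hb (V z)
  have h4 := hpos z
  have h5 : (0:ℝ) ≤ ‖V z‖ ^ 2 := by positivity
  rw [div_mul_eq_mul_div, div_le_iff₀ hc]
  nlinarith [h1, h2, h5, mul_le_mul_of_nonneg_left h3 h4, mul_nonneg hc.le h4]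


set_option maxHeartbeats 1000000 in
/-- The primal-dual operator `V : (x,u) ↦ (Υ⁻¹x − L*u, Σ⁻¹u − Lx)` is a bounded
self-adjoint linear operator, and if `‖√Σ L √Υ‖ ≤ 1` it is `τσ/(τ+σ)`-cocoercive
(in particular monotone). -/
theorem stmt_6 {H G : Type*} [NormedAddCommGroup H] [InnerProductSpace ℝ H] [CompleteSpace H]
    [NormedAddCommGroup G] [InnerProductSpace ℝ G] [CompleteSpace G]
    (Ups UpsI sUps : H →L[ℝ] H) (Sg SgI sSg : G →L[ℝ] G) (L : H →L[ℝ] G)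
    (τ σ : ℝ) (hτ : 0 < τ) (hσ : 0 < σ)
    (hUsa : ∀ x y : H, ⟪Ups x, y⟫ = ⟪x, Ups y⟫)
    (hUsm : ∀ x : H, τ * ‖x‖ ^ 2 ≤ ⟪Ups x, x⟫)
    (hSsa : ∀ u v : G, ⟪Sg u, v⟫ = ⟪u, Sg v⟫)
    (hSsm : ∀ u : G, σ * ‖u‖ ^ 2 ≤ ⟪Sg u, u⟫)
    (hUinv : Ups.comp UpsI = ContinuousLinearMap.id ℝ H ∧
      UpsI.comp Ups = ContinuousLinearMap.id ℝ H)
    (hSinv : Sg.comp SgI = ContinuousLinearMap.id ℝ G ∧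
      SgI.comp Sg = ContinuousLinearMap.id ℝ G)
    (hsU : (∀ x y : H, ⟪sUps x, y⟫ = ⟪x, sUps y⟫) ∧ (∀ x : H, 0 ≤ ⟪sUps x, x⟫) ∧
      sUps.comp sUps = Ups)
    (hsS : (∀ u v : G, ⟪sSg u, v⟫ = ⟪u, sSg v⟫) ∧ (∀ u : G, 0 ≤ ⟪sSg u, u⟫) ∧
      sSg.comp sSg = Sg)
    (V : WithLp 2 (H × G) →L[ℝ] WithLp 2 (H × G))
    (hV : ∀ (x : H) (u : G),
      V (pd x u) = pd (UpsI x - ContinuousLinearMap.adjoint L u) (SgI u - L x)) :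
    (∀ z w : WithLp 2 (H × G), ⟪V z, w⟫ = ⟪z, V w⟫) ∧
    (‖sSg.comp (L.comp sUps)‖ ≤ 1 →
      ((∀ z : WithLp 2 (H × G), 0 ≤ ⟪V z, z⟫) ∧
       ∀ z w : WithLp 2 (H × G),
         (τ * σ / (τ + σ)) * ‖V z - V w‖ ^ 2 ≤ ⟪V z - V w, z - w⟫)) := by
  -- basic inner product on the product
  have hip : ∀ (a c : H) (b d : G), ⟪pd a b, pd c d⟫ = ⟪a, c⟫ + ⟪b, d⟫ :=
    fun a c b d => WithLp.prod_inner_apply _ _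
  -- inverse identities
  have hU1 : ∀ y : H, Ups (UpsI y) = y := fun y => by
    simpa using ContinuousLinearMap.ext_iff.mp hUinv.1 y
  have hU2 : ∀ y : H, UpsI (Ups y) = y := fun y => by
    simpa using ContinuousLinearMap.ext_iff.mp hUinv.2 y
  have hS1 : ∀ v : G, Sg (SgI v) = v := fun v => by
    simpa using ContinuousLinearMap.ext_iff.mp hSinv.1 v
  have hS2 : ∀ v : G, SgI (Sg v) = v := fun v => by
    simpa using ContinuousLinearMap.ext_iff.mp hSinv.2 v
  have hUe : ∀ y : H, sUps (sUps y) = Ups y := fun y => by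
    rw [← hsU.2.2]; rfl
  have hSe : ∀ v : G, sSg (sSg v) = Sg v := fun v => by
    rw [← hsS.2.2]; rfl
  -- UpsI, SgI are self-adjoint
  have hUIsa : ∀ a b : H, ⟪UpsI a, b⟫ = ⟪a, UpsI b⟫ := by
    intro a b
    calc ⟪UpsI a, b⟫ = ⟪UpsI a, Ups (UpsI b)⟫ := by rw [hU1]
    _ = ⟪Ups (UpsI a), UpsI b⟫ := (hUsa _ _).symm
    _ = ⟪a, UpsI b⟫ := by rw [hU1]
  have hSIsa : ∀ a b : G, ⟪SgI a, b⟫ = ⟪a, SgI b⟫ := by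
    intro a b
    calc ⟪SgI a, b⟫ = ⟪SgI a, Sg (SgI b)⟫ := by rw [hS1]
    _ = ⟪Sg (SgI a), SgI b⟫ := (hSsa _ _).symm
    _ = ⟪a, SgI b⟫ := by rw [hS1]
  -- self-adjointness of V
  have hsa : ∀ z w : WithLp 2 (H × G), ⟪V z, w⟫ = ⟪z, V w⟫ := by
    have key : ∀ (x y : H) (u v : G), ⟪V (pd x u), pd y v⟫ = ⟪pd x u, V (pd y v)⟫ := by
      intro x y u v
      rw [hV, hV, hip, hip]
      rw [inner_sub_left, inner_sub_left, inner_sub_right, inner_sub_right,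
        ContinuousLinearMap.adjoint_inner_left, ContinuousLinearMap.adjoint_inner_right]
      rw [hUIsa, hSIsa]
      ring
    intro z w
    exact key z.ofLp.1 w.ofLp.1 z.ofLp.2 w.ofLp.2
  refine ⟨hsa, fun hM => ?_⟩
  -- commutation and square-root inverse facts
  have hcommU : ∀ y : H, Ups (sUps y) = sUps (Ups y) := by
    intro y
    calc Ups (sUps y) = sUps (sUps (sUps y)) := (hUe (sUps y)).symm
    _ = sUps (Ups y) := by rw [hUe y]
  have hcommS : ∀ v : G, Sg (sSg v) = sSg (Sg v) := by
    intro v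
    calc Sg (sSg v) = sSg (sSg (sSg v)) := (hSe (sSg v)).symm
    _ = sSg (Sg v) := by rw [hSe v]
  have hkeyU : ∀ y : H, sUps (UpsI (sUps y)) = y := by
    intro y
    have h : Ups (sUps (UpsI (sUps y))) = Ups y := by
      rw [hcommU, hU1, hUe]
    have h2 := congrArg UpsI h
    rwa [hU2, hU2] at h2
  have hkeyS : ∀ v : G, sSg (SgI (sSg v)) = v := by
    intro v
    have h : Sg (sSg (SgI (sSg v))) = Sg v := by
      rw [hcommS, hS1, hSe]
    have h2 := congrArg SgI h
    rwa [hS2, hS2] at h2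
  -- decomposition x = sUps p with the key identities
  have hpU : ∀ x : H, ∃ p : H, sUps p = x ∧ ⟪UpsI x, x⟫ = ‖p‖ ^ 2 := by
    intro x
    refine ⟨sUps (UpsI x), by rw [hUe, hU1], ?_⟩
    calc ⟪UpsI x, x⟫ = ⟪UpsI x, sUps (sUps (UpsI x))⟫ := by rw [hUe, hU1]
    _ = ⟪sUps (UpsI x), sUps (UpsI x)⟫ := by rw [← hsU.1]
    _ = ‖sUps (UpsI x)‖ ^ 2 := real_inner_self_eq_norm_sq _
  have hpS : ∀ u : G, ∃ q : G, sSg q = u ∧ ⟪SgI u, u⟫ = ‖q‖ ^ 2 := by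
    intro u
    refine ⟨sSg (SgI u), by rw [hSe, hS1], ?_⟩
    calc ⟪SgI u, u⟫ = ⟪SgI u, sSg (sSg (SgI u))⟫ := by rw [hSe, hS1]
    _ = ⟪sSg (SgI u), sSg (SgI u)⟫ := by rw [← hsS.1]
    _ = ‖sSg (SgI u)‖ ^ 2 := real_inner_self_eq_norm_sq _
  -- quantitative bounds on UpsI, SgI
  have hbU : ∀ x : H, τ * ⟪UpsI x, x⟫ ≤ ‖x‖ ^ 2 := by
    intro x
    have hsm := hUsm (UpsI x)
    rw [hU1] at hsm
    have hcs : ⟪x, UpsI x⟫ ≤ ‖x‖ * ‖UpsI x‖ := real_inner_le_norm _ _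
    rw [real_inner_comm] at hsm
    rw [real_inner_comm] at hcs
    nlinarith [sq_nonneg (‖x‖ - τ * ‖UpsI x‖), mul_le_mul_of_nonneg_left hcs hτ.le,
      mul_le_mul_of_nonneg_left hsm hτ.le]
  have hbS : ∀ u : G, σ * ⟪SgI u, u⟫ ≤ ‖u‖ ^ 2 := by
    intro u
    have hsm := hSsm (SgI u)
    rw [hS1] at hsm
    have hcs : ⟪u, SgI u⟫ ≤ ‖u‖ * ‖SgI u‖ := real_inner_le_norm _ _
    rw [real_inner_comm] at hsm
    rw [real_inner_comm] at hcs
    nlinarith [sq_nonneg (‖u‖ - σ * ‖SgI u‖), mul_le_mul_of_nonneg_left hcs hσ.le,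
      mul_le_mul_of_nonneg_left hsm hσ.le]
  -- quadratic form of V
  have hQ : ∀ (x : H) (u : G),
      ⟪V (pd x u), pd x u⟫ = ⟪UpsI x, x⟫ + ⟪SgI u, u⟫ - 2 * ⟪L x, u⟫ := by
    intro x u
    rw [hV, hip, inner_sub_left, inner_sub_left,
      ContinuousLinearMap.adjoint_inner_left, real_inner_comm u (L x)]
    ring
  -- cross term bound
  set M := sSg.comp (L.comp sUps) with hMdef
  have habs : ∀ (p : H) (q : G), |⟪L (sUps p), sSg q⟫| ≤ ‖p‖ * ‖q‖ := by
    intro p q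
    have h1 : ⟪L (sUps p), sSg q⟫ = ⟪M p, q⟫ := (hsS.1 _ _).symm
    rw [h1]
    calc |⟪M p, q⟫| ≤ ‖M p‖ * ‖q‖ := abs_real_inner_le_norm _ _
    _ ≤ (‖M‖ * ‖p‖) * ‖q‖ :=
      mul_le_mul_of_nonneg_right (M.le_opNorm p) (norm_nonneg q)
    _ ≤ ‖p‖ * ‖q‖ := by
      nlinarith [norm_nonneg p, norm_nonneg q, mul_nonneg (norm_nonneg p) (norm_nonneg q)]
  -- norm on the product
  have hzn : ∀ (x : H) (u : G), ‖pd x u‖ ^ 2 = ‖x‖ ^ 2 + ‖u‖ ^ 2 := by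
    intro x u
    rw [← real_inner_self_eq_norm_sq, hip, real_inner_self_eq_norm_sq,
      real_inner_self_eq_norm_sq]
  -- positivity and upper bound of the quadratic form
  have hbounds : ∀ z : WithLp 2 (H × G),
      0 ≤ ⟪V z, z⟫ ∧ ⟪V z, z⟫ ≤ ((τ + σ) / (τ * σ)) * ‖z‖ ^ 2 := by
    have key : ∀ (x : H) (u : G),
        0 ≤ ⟪V (pd x u), pd x u⟫ ∧
        ⟪V (pd x u), pd x u⟫ ≤ ((τ + σ) / (τ * σ)) * ‖pd x u‖ ^ 2 := by
      intro x u
      obtain ⟨p, hpx, hpq⟩ := hpU x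
      obtain ⟨q, hqu, hqq⟩ := hpS u
      have hcross : |⟪L x, u⟫| ≤ ‖p‖ * ‖q‖ := by
        rw [← hpx, ← hqu]; exact habs p q
      obtain ⟨hc1, hc2⟩ := abs_le.mp hcross
      have hQx := hQ x u
      have hb1 := hbU x
      have hb2 := hbS u
      rw [hpq] at hQx hb1
      rw [hqq] at hQx hb2
      constructor
      · rw [hQx]
        nlinarith [sq_nonneg (‖p‖ - ‖q‖)]
      · rw [hQx, hzn, div_mul_eq_mul_div, le_div_iff₀ (by positivity : (0:ℝ) < τ * σ)]
        nlinarith [sq_nonneg (τ * ‖p‖ - σ * ‖q‖),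
          mul_le_mul_of_nonneg_left hc1 (by positivity : (0:ℝ) ≤ 2 * (τ * σ)),
          mul_le_mul_of_nonneg_left hb1 (by positivity : (0:ℝ) ≤ τ + σ),
          mul_le_mul_of_nonneg_left hb2 (by positivity : (0:ℝ) ≤ τ + σ)]
    intro z
    exact key z.ofLp.1 z.ofLp.2
  refine ⟨fun z => (hbounds z).1, fun z w => ?_⟩
  have hc : (0:ℝ) < (τ + σ) / (τ * σ) := by positivity
  have h := coco V hsa (fun z => (hbounds z).1) _ hc (fun z => (hbounds z).2) (z - w)
  rw [one_div_div, map_sub] at h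
  exact h
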